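/- Let G be a connected simple graph of order n with diam(G) = 2 and β(G) = n − 3, with twin graph G*, and let v be a vertex of G such that Γ_2^*(v^*) ≠ ∅ and Γ_1(v) is homogeneous. If Γ_2(v) is homogeneous and |R_1^*(v^*)| = 2, then |Γ_2^*(v^*)| ≤ 2. -/

import Mathlib

namespace PaperMetricDim

open SimpleGraph

variable {V : Type*}

/-- A set `W` of vertices resolves the graph `G`: any two distinct vertices have
different distance to some vertex of `W`. -/
def Resolves (G : SimpleGraph V) (W : Set V) : Prop :=
  ∀ u v : V, u ≠ v → ∃ w ∈ W, G.dist u w ≠ G.dist v w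

/-- The metric dimension of `G`: the minimum cardinality of a resolving set. -/
noncomputable def metricDim (G : SimpleGraph V) : ℕ :=
  sInf {k : ℕ | ∃ W : Set V, Resolves G W ∧ W.ncard = k}

/-- `G` is connected and has diameter exactly `d`. -/
def diamEq (G : SimpleGraph V) (d : ℕ) : Prop :=
  G.Connected ∧ (∀ u v : V, G.dist u v ≤ d) ∧ ∃ u v : V, G.dist u v = d

/-- A set of vertices is homogeneous if it induces a complete or an empty subgraph. -/
def Homogeneous (G : SimpleGraph V) (S : Set V) : Prop :=
  (∀ a ∈ S, ∀ b ∈ S, a ≠ b → G.Adj a b) ∨ (∀ a ∈ S, ∀ b ∈ S, ¬ G.Adj a b)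

/-- Two distinct vertices are twins: they have the same neighbours apart from
each other. -/
def Twins (G : SimpleGraph V) (u v : V) : Prop :=
  u ≠ v ∧ G.neighborSet u \ {v} = G.neighborSet v \ {u}

/-- The twin equivalence relation: equal or twins. -/
def twinRel (G : SimpleGraph V) (u v : V) : Prop := u = v ∨ Twins G u v

/-- The twin class of a vertex. -/
def twinClass (G : SimpleGraph V) (v : V) : Set V := {u : V | twinRel G v u}

/-- The vertices of the twin graph: twin equivalence classes. -/
def TwinVertex (G : SimpleGraph V) : Type _ := {S : Set V // ∃ v : V, S = twinClass G v}

/-- The twin graph `G*` of `G`: twin classes, two distinct classes being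
adjacent iff (some, equivalently all) representatives are adjacent in `G`. -/
def twinGraph (G : SimpleGraph V) : SimpleGraph (TwinVertex G) where
  Adj A B := A ≠ B ∧ ∃ a ∈ A.1, ∃ b ∈ B.1, G.Adj a b
  symm := ⟨by
    rintro A B ⟨hne, a, ha, b, hb, hab⟩
    exact ⟨hne.symm, b, hb, a, ha, hab.symm⟩⟩
  loopless := ⟨by rintro A ⟨hne, -⟩; exact hne rfl⟩

/-- The twin class of `v`, as a vertex of the twin graph. -/
def cls (G : SimpleGraph V) (v : V) : TwinVertex G := ⟨twinClass G v, v, rfl⟩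

/-- A twin-graph vertex of type (1): a singleton class. -/
def typeOne (G : SimpleGraph V) (A : TwinVertex G) : Prop := ∃ v : V, A.1 = {v}

/-- A twin-graph vertex of type (K): a class with at least two vertices inducing
a complete subgraph. -/
def typeK (G : SimpleGraph V) (A : TwinVertex G) : Prop :=
  A.1.Nontrivial ∧ ∀ a ∈ A.1, ∀ b ∈ A.1, a ≠ b → G.Adj a b

/-- A twin-graph vertex of type (N): a class with at least two vertices inducing
an empty subgraph. -/
def typeN (G : SimpleGraph V) (A : TwinVertex G) : Prop :=
  A.1.Nontrivial ∧ ∀ a ∈ A.1, ∀ b ∈ A.1, ¬ G.Adj a b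

/-- Type (1K): type (1) or type (K). -/
def type1K (G : SimpleGraph V) (A : TwinVertex G) : Prop := typeOne G A ∨ typeK G A

/-- Type (1N): type (1) or type (N). -/
def type1N (G : SimpleGraph V) (A : TwinVertex G) : Prop := typeOne G A ∨ typeN G A

/-- Type (KN): type (K) or type (N). -/
def typeKN (G : SimpleGraph V) (A : TwinVertex G) : Prop := typeK G A ∨ typeN G A

/-- `Γ_i(v)`: the set of vertices at distance `i` from `v`. -/
def Gamma (G : SimpleGraph V) (i : ℕ) (v : V) : Set V := {u : V | G.dist u v = i}

/-- `Γ_i^*(v^*)`: the set of twin-graph vertices at distance `i` from `v^*`. -/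
def GammaStar (G : SimpleGraph V) (i : ℕ) (v : V) : Set (TwinVertex G) :=
  {A : TwinVertex G | (twinGraph G).dist A (cls G v) = i}

/-- `R_1(v)`: neighbours of `v` having a neighbour at distance 2 from `v`. -/
def R1 (G : SimpleGraph V) (v : V) : Set V :=
  {x ∈ Gamma G 1 v | ∃ y ∈ Gamma G 2 v, G.Adj x y}

/-- `R_2(v) = Γ_1(v) \ R_1(v)`. -/
def R2 (G : SimpleGraph V) (v : V) : Set V := Gamma G 1 v \ R1 G v

/-- `R_1^*(v^*)`: twin-graph neighbours of `v^*` having a neighbour in `Γ_2^*(v^*)`. -/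
def R1Star (G : SimpleGraph V) (v : V) : Set (TwinVertex G) :=
  {A ∈ GammaStar G 1 v | ∃ B ∈ GammaStar G 2 v, (twinGraph G).Adj A B}

/-- `R_2^*(v^*) = Γ_1^*(v^*) \ R_1^*(v^*)`. -/
def R2Star (G : SimpleGraph V) (v : V) : Set (TwinVertex G) :=
  GammaStar G 1 v \ R1Star G v

/-- `M_1(x) = Γ_1(v) ∩ Γ_1(x)` (for `x ∈ Γ_1(v)`). -/
def M1 (G : SimpleGraph V) (v x : V) : Set V := Gamma G 1 v ∩ Gamma G 1 x

/-- `M_2(x) = Γ_1(v) ∩ Γ_2(x)` (for `x ∈ Γ_1(v)`). -/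
def M2 (G : SimpleGraph V) (v x : V) : Set V := Gamma G 1 v ∩ Gamma G 2 x

/-- Structure `G_1`: the twin graph is `K_3` and has at most one vertex of type (1K). -/
def structG1 (G : SimpleGraph V) : Prop :=
  ∃ a b c : TwinVertex G, a ≠ b ∧ a ≠ c ∧ b ≠ c ∧
    (∀ X : TwinVertex G, X = a ∨ X = b ∨ X = c) ∧
    (twinGraph G).Adj a b ∧ (twinGraph G).Adj a c ∧ (twinGraph G).Adj b c ∧
    (∀ X Y : TwinVertex G, type1K G X → type1K G Y → X = Y)

/-- Structure `G_2`: the twin graph is the path `P_3` with (a) centre of type (N)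
and some leaf of type (K), or (b) one leaf of type (K) and the other of type (KN). -/
def structG2 (G : SimpleGraph V) : Prop :=
  ∃ a b c : TwinVertex G, a ≠ b ∧ a ≠ c ∧ b ≠ c ∧
    (∀ X : TwinVertex G, X = a ∨ X = b ∨ X = c) ∧
    (twinGraph G).Adj a b ∧ (twinGraph G).Adj b c ∧ ¬ (twinGraph G).Adj a c ∧
    ((typeN G b ∧ (typeK G a ∨ typeK G c)) ∨
     (typeK G a ∧ typeKN G c) ∨ (typeK G c ∧ typeKN G a))

/-- Structure `G_3`: the twin graph is the paw, the triangle being `u, p, q` with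
the pendant vertex `l` attached to `u`; `p` is of type (N), `q` of type (1K),
`l` of type (1N); and if `q` is of type (K) then neither `l` nor `u` is of type (N). -/
def structG3 (G : SimpleGraph V) : Prop :=
  ∃ u p q l : TwinVertex G,
    u ≠ p ∧ u ≠ q ∧ u ≠ l ∧ p ≠ q ∧ p ≠ l ∧ q ≠ l ∧
    (∀ X : TwinVertex G, X = u ∨ X = p ∨ X = q ∨ X = l) ∧
    (twinGraph G).Adj u p ∧ (twinGraph G).Adj u q ∧ (twinGraph G).Adj p q ∧
    (twinGraph G).Adj u l ∧ ¬ (twinGraph G).Adj p l ∧ ¬ (twinGraph G).Adj q l ∧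
    typeN G p ∧ type1K G q ∧ type1N G l ∧
    (typeK G q → ¬ typeN G l ∧ ¬ typeN G u)

/-- Structure `G_4`: the twin graph is the cycle `C_5` and every vertex is of type (1). -/
def structG4 (G : SimpleGraph V) : Prop :=
  ∃ v0 v1 v2 v3 v4 : TwinVertex G,
    v0 ≠ v1 ∧ v0 ≠ v2 ∧ v0 ≠ v3 ∧ v0 ≠ v4 ∧ v1 ≠ v2 ∧ v1 ≠ v3 ∧ v1 ≠ v4 ∧
    v2 ≠ v3 ∧ v2 ≠ v4 ∧ v3 ≠ v4 ∧
    (∀ X : TwinVertex G, X = v0 ∨ X = v1 ∨ X = v2 ∨ X = v3 ∨ X = v4) ∧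
    (twinGraph G).Adj v0 v1 ∧ (twinGraph G).Adj v1 v2 ∧ (twinGraph G).Adj v2 v3 ∧
    (twinGraph G).Adj v3 v4 ∧ (twinGraph G).Adj v4 v0 ∧
    ¬ (twinGraph G).Adj v0 v2 ∧ ¬ (twinGraph G).Adj v1 v3 ∧ ¬ (twinGraph G).Adj v2 v4 ∧
    ¬ (twinGraph G).Adj v3 v0 ∧ ¬ (twinGraph G).Adj v4 v1 ∧
    (∀ X : TwinVertex G, typeOne G X)

/-- Structure `G_5`: the twin graph is `C_5` with one chord (cycle `v0 v1 v2 v3 v4`,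
chord `v0 v2`); the two adjacent degree-2 vertices `v3, v4` are of type (1), the
other vertices of type (1K). -/
def structG5 (G : SimpleGraph V) : Prop :=
  ∃ v0 v1 v2 v3 v4 : TwinVertex G,
    v0 ≠ v1 ∧ v0 ≠ v2 ∧ v0 ≠ v3 ∧ v0 ≠ v4 ∧ v1 ≠ v2 ∧ v1 ≠ v3 ∧ v1 ≠ v4 ∧
    v2 ≠ v3 ∧ v2 ≠ v4 ∧ v3 ≠ v4 ∧
    (∀ X : TwinVertex G, X = v0 ∨ X = v1 ∨ X = v2 ∨ X = v3 ∨ X = v4) ∧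
    (twinGraph G).Adj v0 v1 ∧ (twinGraph G).Adj v1 v2 ∧ (twinGraph G).Adj v2 v3 ∧
    (twinGraph G).Adj v3 v4 ∧ (twinGraph G).Adj v4 v0 ∧ (twinGraph G).Adj v0 v2 ∧
    ¬ (twinGraph G).Adj v1 v3 ∧ ¬ (twinGraph G).Adj v1 v4 ∧ ¬ (twinGraph G).Adj v2 v4 ∧
    typeOne G v3 ∧ typeOne G v4 ∧ type1K G v0 ∧ type1K G v1 ∧ type1K G v2

/-- Structure `G_6`: the twin graph is `C_5` with two adjacent chords (cycle
`v0 v1 v2 v3 v4`, chords `v0 v2` and `v0 v3`, so `v0` has degree 4); `v0` is of any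
type, the other vertices of type (1K); no two non-adjacent vertices are both of
type (K), and no two adjacent vertices have the different types (K) and (N). -/
def structG6 (G : SimpleGraph V) : Prop :=
  ∃ v0 v1 v2 v3 v4 : TwinVertex G,
    v0 ≠ v1 ∧ v0 ≠ v2 ∧ v0 ≠ v3 ∧ v0 ≠ v4 ∧ v1 ≠ v2 ∧ v1 ≠ v3 ∧ v1 ≠ v4 ∧
    v2 ≠ v3 ∧ v2 ≠ v4 ∧ v3 ≠ v4 ∧
    (∀ X : TwinVertex G, X = v0 ∨ X = v1 ∨ X = v2 ∨ X = v3 ∨ X = v4) ∧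
    (twinGraph G).Adj v0 v1 ∧ (twinGraph G).Adj v1 v2 ∧ (twinGraph G).Adj v2 v3 ∧
    (twinGraph G).Adj v3 v4 ∧ (twinGraph G).Adj v4 v0 ∧ (twinGraph G).Adj v0 v2 ∧
    (twinGraph G).Adj v0 v3 ∧
    ¬ (twinGraph G).Adj v1 v3 ∧ ¬ (twinGraph G).Adj v1 v4 ∧ ¬ (twinGraph G).Adj v2 v4 ∧
    type1K G v1 ∧ type1K G v2 ∧ type1K G v3 ∧ type1K G v4 ∧
    (∀ X Y : TwinVertex G, X ≠ Y → ¬ (twinGraph G).Adj X Y →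
      ¬ (typeK G X ∧ typeK G Y)) ∧
    (∀ X Y : TwinVertex G, (twinGraph G).Adj X Y → ¬ (typeK G X ∧ typeN G Y))

/-- Structure `G_7`: the twin graph is the kite (`K_4` minus an edge, vertices
`a, b` of degree 3 in the kite and `c, d` the non-adjacent pair) with a pendant
vertex `l` attached to the degree-3 vertex `a`; `l` is of type (1), `a` and `b`
are of type (1K), one of `c, d` is of type (K) and the other of type (1). -/
def structG7 (G : SimpleGraph V) : Prop :=
  ∃ a b c d l : TwinVertex G,
    a ≠ b ∧ a ≠ c ∧ a ≠ d ∧ a ≠ l ∧ b ≠ c ∧ b ≠ d ∧ b ≠ l ∧ c ≠ d ∧ c ≠ l ∧ d ≠ l ∧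
    (∀ X : TwinVertex G, X = a ∨ X = b ∨ X = c ∨ X = d ∨ X = l) ∧
    (twinGraph G).Adj a b ∧ (twinGraph G).Adj a c ∧ (twinGraph G).Adj a d ∧
    (twinGraph G).Adj b c ∧ (twinGraph G).Adj b d ∧ (twinGraph G).Adj a l ∧
    ¬ (twinGraph G).Adj c d ∧ ¬ (twinGraph G).Adj b l ∧ ¬ (twinGraph G).Adj c l ∧
    ¬ (twinGraph G).Adj d l ∧
    typeOne G l ∧ type1K G a ∧ type1K G b ∧ typeK G c ∧ typeOne G d

/-- Structure `G_8`: the twin graph is the kite (`K_4` minus an edge, `a, b` of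
degree 3 and `c, d` the non-adjacent degree-2 pair); one degree-2 vertex `c` is of
type (K) and the other `d` of type (1); one degree-3 vertex `a` is of type (N)
and the other `b` of type (1K). -/
def structG8 (G : SimpleGraph V) : Prop :=
  ∃ a b c d : TwinVertex G,
    a ≠ b ∧ a ≠ c ∧ a ≠ d ∧ b ≠ c ∧ b ≠ d ∧ c ≠ d ∧
    (∀ X : TwinVertex G, X = a ∨ X = b ∨ X = c ∨ X = d) ∧
    (twinGraph G).Adj a b ∧ (twinGraph G).Adj a c ∧ (twinGraph G).Adj a d ∧
    (twinGraph G).Adj b c ∧ (twinGraph G).Adj b d ∧ ¬ (twinGraph G).Adj c d ∧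
    typeN G a ∧ type1K G b ∧ typeK G c ∧ typeOne G d

/-- Structure `G_9`: the twin graph is `C_4`, two adjacent vertices of type (K)
and the other two of type (1). -/
def structG9 (G : SimpleGraph V) : Prop :=
  ∃ v0 v1 v2 v3 : TwinVertex G,
    v0 ≠ v1 ∧ v0 ≠ v2 ∧ v0 ≠ v3 ∧ v1 ≠ v2 ∧ v1 ≠ v3 ∧ v2 ≠ v3 ∧
    (∀ X : TwinVertex G, X = v0 ∨ X = v1 ∨ X = v2 ∨ X = v3) ∧
    (twinGraph G).Adj v0 v1 ∧ (twinGraph G).Adj v1 v2 ∧ (twinGraph G).Adj v2 v3 ∧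
    (twinGraph G).Adj v3 v0 ∧ ¬ (twinGraph G).Adj v0 v2 ∧ ¬ (twinGraph G).Adj v1 v3 ∧
    typeK G v0 ∧ typeK G v1 ∧ typeOne G v2 ∧ typeOne G v3

/-- Structure `G_10`: the twin graph is the wheel `C_4 ∨ K_1` (hub `h`, rim
`v0 v1 v2 v3`); two adjacent rim (degree-3) vertices `v0, v1` are of type (K), the
hub is of type (1K), and the other vertices of type (1). -/
def structG10 (G : SimpleGraph V) : Prop :=
  ∃ h v0 v1 v2 v3 : TwinVertex G,
    h ≠ v0 ∧ h ≠ v1 ∧ h ≠ v2 ∧ h ≠ v3 ∧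
    v0 ≠ v1 ∧ v0 ≠ v2 ∧ v0 ≠ v3 ∧ v1 ≠ v2 ∧ v1 ≠ v3 ∧ v2 ≠ v3 ∧
    (∀ X : TwinVertex G, X = h ∨ X = v0 ∨ X = v1 ∨ X = v2 ∨ X = v3) ∧
    (twinGraph G).Adj h v0 ∧ (twinGraph G).Adj h v1 ∧ (twinGraph G).Adj h v2 ∧
    (twinGraph G).Adj h v3 ∧
    (twinGraph G).Adj v0 v1 ∧ (twinGraph G).Adj v1 v2 ∧ (twinGraph G).Adj v2 v3 ∧
    (twinGraph G).Adj v3 v0 ∧ ¬ (twinGraph G).Adj v0 v2 ∧ ¬ (twinGraph G).Adj v1 v3 ∧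
    typeK G v0 ∧ typeK G v1 ∧ type1K G h ∧ typeOne G v2 ∧ typeOne G v3

-- ### auxiliary lemmas

variable {G : SimpleGraph V} {u v w a b : V}

lemma adj_transfer {u u' w : V} (h : twinRel G u u') (ha : G.Adj u w) (hw : w ≠ u') :
    G.Adj u' w := by
  rcases h with rfl | ⟨hne, hset⟩
  · exact ha
  · have : w ∈ G.neighborSet u \ {u'} := ⟨ha, hw⟩
    rw [hset] at this
    exact this.1

lemma twins_symm {u v : V} (h : Twins G u v) : Twins G v u := ⟨h.1.symm, h.2.symm⟩

lemma twinRel_symm {u v : V} (h : twinRel G u v) : twinRel G v u := by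
  rcases h with rfl | h
  · exact Or.inl rfl
  · exact Or.inr (twins_symm h)

lemma twinRel_trans {u v w : V} (h1 : twinRel G u v) (h2 : twinRel G v w) :
    twinRel G u w := by
  rcases h1 with rfl | h1
  · exact h2
  rcases h2 with rfl | h2
  · exact Or.inr h1
  by_cases huw : u = w
  · exact Or.inl huw
  refine Or.inr ⟨huw, ?_⟩
  have main : ∀ p q r : V, Twins G p q → Twins G q r → p ≠ r →
      ∀ z, G.Adj p z → z ≠ r → G.Adj r z := by
    intro p q r hpq hqr hpr z hz hzr
    by_cases hzq : z = q
    · have h1' : G.Adj p q := hzq ▸ hz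
      have h2' : G.Adj r p := adj_transfer (Or.inr hqr) h1'.symm hpr
      have h3' : G.Adj q r := adj_transfer (Or.inr hpq) h2'.symm (Ne.symm hqr.1)
      rw [hzq]
      exact h3'.symm
    · have h1' : G.Adj q z := adj_transfer (Or.inr hpq) hz hzq
      exact adj_transfer (Or.inr hqr) h1' hzr
  ext z
  simp only [Set.mem_diff, mem_neighborSet, Set.mem_singleton_iff]
  constructor
  · rintro ⟨hz, hzw⟩
    exact ⟨main u v w h1 h2 huw z hz hzw, hz.ne'⟩
  · rintro ⟨hz, hzu⟩
    exact ⟨main w v u (twins_symm h2) (twins_symm h1) (Ne.symm huw) z hz hzu, hz.ne'⟩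

lemma mem_twinClass_self (u : V) : u ∈ twinClass G u := Or.inl rfl

lemma twinClass_eq {u w : V} (h : twinRel G u w) : twinClass G u = twinClass G w := by
  ext z
  exact ⟨fun hz => twinRel_trans (twinRel_symm h) hz, fun hz => twinRel_trans h hz⟩

lemma cls_eq_of_mem {A : TwinVertex G} {a : V} (ha : a ∈ A.1) : A = cls G a := by
  obtain ⟨w, hw⟩ := A.2
  apply Subtype.ext
  rw [hw] at ha ⊢
  exact twinClass_eq ha

lemma rel_of_mem_mem {A : TwinVertex G} {a a' : V} (ha : a ∈ A.1) (ha' : a' ∈ A.1) :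
    twinRel G a a' := by
  obtain ⟨w, hw⟩ := A.2
  rw [hw] at ha ha'
  exact twinRel_trans (twinRel_symm ha) ha'

lemma ne_of_mem_ne {A B : TwinVertex G} {a b : V} (hAB : A ≠ B) (ha : a ∈ A.1)
    (hb : b ∈ B.1) : a ≠ b := by
  rintro rfl
  exact hAB ((cls_eq_of_mem ha).trans (cls_eq_of_mem hb).symm)

lemma mem_cls_self (v : V) : v ∈ (cls G v).1 := mem_twinClass_self v

lemma adj_of_clsAdj {A B : TwinVertex G} {a b : V} (h : (twinGraph G).Adj A B)
    (ha : a ∈ A.1) (hb : b ∈ B.1) : G.Adj a b := by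
  obtain ⟨hne, a0, ha0, b0, hb0, hadj⟩ := h
  have hab : a ≠ b := ne_of_mem_ne hne ha hb
  have h1 : G.Adj a b0 :=
    adj_transfer (rel_of_mem_mem ha0 ha) hadj (ne_of_mem_ne hne.symm hb0 ha)
  have h2 : G.Adj b a := adj_transfer (rel_of_mem_mem hb0 hb) h1.symm hab
  exact h2.symm

lemma adj_iff_of_rel {x x' r : V} (h : twinRel G x x') (hr : r ≠ x) (hr' : r ≠ x') :
    (G.Adj r x ↔ G.Adj r x') := by
  constructor
  · intro hh
    exact (adj_transfer h hh.symm hr').symm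
  · intro hh
    exact (adj_transfer (twinRel_symm h) hh.symm hr).symm

lemma dist2 (hconn : G.Connected) (hle : ∀ u w : V, G.dist u w ≤ 2)
    {u w : V} (hne : u ≠ w) (hnadj : ¬ G.Adj u w) : G.dist u w = 2 := by
  have h0 : G.dist u w ≠ 0 := fun h => hne (hconn.dist_eq_zero_iff.mp h)
  have h1 : G.dist u w ≠ 1 := fun h => hnadj (SimpleGraph.dist_eq_one_iff_adj.mp h)
  have := hle u w
  omega

lemma exists_mid {a v : V} (h : G.dist a v = 2) : ∃ u, G.Adj a u ∧ G.Adj u v := by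
  obtain ⟨p, hp⟩ := SimpleGraph.exists_walk_of_dist_ne_zero (by rw [h]; exact two_ne_zero)
  rw [h] at hp
  cases p with
  | nil => simp at hp
  | cons h1 q =>
    cases q with
    | nil => simp at hp
    | cons h2 r =>
      simp only [SimpleGraph.Walk.length_cons] at hp
      have hr0 : r.length = 0 := by omega
      have := r.eq_of_length_eq_zero hr0
      subst this
      exact ⟨_, h1, h2⟩

lemma gammaStar2_props {A : TwinVertex G} {v : V} (hA : A ∈ GammaStar G 2 v) :
    A ≠ cls G v ∧ ¬ (twinGraph G).Adj A (cls G v) := by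
  have hA' : (twinGraph G).dist A (cls G v) = 2 := hA
  constructor
  · rintro rfl
    rw [SimpleGraph.dist_self] at hA'
    exact two_ne_zero hA'.symm
  · intro h
    rw [SimpleGraph.dist_eq_one_iff_adj.mpr h] at hA'
    exact absurd hA' (by decide)

lemma dist_eq_two_of_gammaStar2 (hconn : G.Connected) (hle : ∀ u w : V, G.dist u w ≤ 2)
    {A : TwinVertex G} {v a : V} (hA : A ∈ GammaStar G 2 v) (ha : a ∈ A.1) :
    G.dist a v = 2 := by
  obtain ⟨hne, hnadj⟩ := gammaStar2_props hA
  have hav : a ≠ v := by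
    rintro rfl
    exact hne (cls_eq_of_mem ha)
  apply dist2 hconn hle hav
  intro h
  exact hnadj ⟨hne, a, ha, v, mem_cls_self v, h⟩

lemma rel_of_cls_eq {u w : V} (h : cls G u = cls G w) : twinRel G u w := by
  have : (cls G u).1 = (cls G w).1 := congrArg Subtype.val h
  have hm : w ∈ (cls G u).1 := by rw [this]; exact mem_cls_self w
  exact hm

lemma mem_R1Star_of (hconn : G.Connected) (hle : ∀ u w : V, G.dist u w ≤ 2)
    {A : TwinVertex G} {v a u : V} (hA : A ∈ GammaStar G 2 v) (ha : a ∈ A.1)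
    (hau : G.Adj a u) (huv : G.Adj u v) : cls G u ∈ R1Star G v := by
  have hav : G.dist a v = 2 := dist_eq_two_of_gammaStar2 hconn hle hA ha
  have hanv : a ≠ v := by
    rintro rfl
    rw [SimpleGraph.dist_self] at hav
    exact two_ne_zero hav.symm
  have hnadjav : ¬ G.Adj a v := by
    intro h
    rw [SimpleGraph.dist_eq_one_iff_adj.mpr h] at hav
    exact absurd hav (by decide)
  have h1 : cls G u ≠ cls G v := by
    intro h
    have hrel : twinRel G u v := rel_of_cls_eq h
    exact hnadjav (adj_transfer hrel hau.symm hanv).symm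
  have h2 : cls G u ≠ A := by
    intro h
    have hrel : twinRel G u a := rel_of_cls_eq (h.trans (cls_eq_of_mem ha))
    exact hnadjav (adj_transfer hrel huv (Ne.symm hanv))
  refine ⟨?_, A, hA, ?_⟩
  · show (twinGraph G).dist (cls G u) (cls G v) = 1
    exact SimpleGraph.dist_eq_one_iff_adj.mpr ⟨h1, u, mem_cls_self u, v, mem_cls_self v, huv⟩
  · exact ⟨h2, u, mem_cls_self u, a, ha, hau.symm⟩

lemma resolves_of_forall (hconn : G.Connected) (S : Set V)
    (h : ∀ u ∈ S, ∀ u' ∈ S, u ≠ u' → ∃ w, w ∉ S ∧ G.dist u w ≠ G.dist u' w) :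
    Resolves G Sᶜ := by
  intro u u' hne
  by_cases hu : u ∈ S
  · by_cases hu' : u' ∈ S
    · obtain ⟨w, hw, hd⟩ := h u hu u' hu' hne
      exact ⟨w, hw, hd⟩
    · refine ⟨u', hu', ?_⟩
      rw [SimpleGraph.dist_self]
      intro h0
      exact hne (hconn.dist_eq_zero_iff.mp h0)
  · refine ⟨u, hu, ?_⟩
    rw [SimpleGraph.dist_self]
    intro h0
    exact hne ((hconn.dist_eq_zero_iff.mp h0.symm).symm)

lemma metricDim_le {W : Set V} (h : Resolves G W) : metricDim G ≤ W.ncard :=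
  Nat.sInf_le ⟨W, h, rfl⟩

-- helpers for cardinality / contradiction

lemma contra_of_resolve {V : Type*} [Fintype V] {G : SimpleGraph V}
    (hbeta : metricDim G = Fintype.card V - 3)
    {W : Set V} (h : Resolves G W) (hcard : W.ncard + 4 ≤ Fintype.card V) : False := by
  have h1 := metricDim_le h
  rw [hbeta] at h1
  omega

lemma ncard_quad {α : Type*} [Finite α] {p q r s : α}
    (h1 : p ≠ q) (h2 : p ≠ r) (h3 : p ≠ s) (h4 : q ≠ r) (h5 : q ≠ s) (h6 : r ≠ s) :
    ({p, q, r, s} : Set α).ncard = 4 := by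
  rw [Set.ncard_insert_of_notMem (by simp [h1, h2, h3]),
    Set.ncard_insert_of_notMem (by simp [h4, h5]), Set.ncard_pair h6]

lemma contra_of_resolve_compl {V : Type*} [Fintype V] {G : SimpleGraph V}
    (hbeta : metricDim G = Fintype.card V - 3)
    {S : Set V} (hS : S.ncard = 4) (h : Resolves G Sᶜ) : False := by
  refine contra_of_resolve hbeta h ?_
  have h2 := Set.ncard_add_ncard_compl S
  rw [Nat.card_eq_fintype_card] at h2
  omega

lemma card_ge_six {V : Type*} [Fintype V] {p q r s t u : V}
    (h1 : p ≠ q) (h2 : p ≠ r) (h3 : p ≠ s) (h4 : p ≠ t) (h5 : p ≠ u)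
    (h6 : q ≠ r) (h7 : q ≠ s) (h8 : q ≠ t) (h9 : q ≠ u)
    (h10 : r ≠ s) (h11 : r ≠ t) (h12 : r ≠ u)
    (h13 : s ≠ t) (h14 : s ≠ u) (h15 : t ≠ u) : 6 ≤ Fintype.card V := by
  have h6' : ({p, q, r, s, t, u} : Set V).ncard = 6 := by
    rw [Set.ncard_insert_of_notMem (by simp [h1, h2, h3, h4, h5]),
      Set.ncard_insert_of_notMem (by simp [h6, h7, h8, h9]),
      Set.ncard_insert_of_notMem (by simp [h10, h11, h12]),
      Set.ncard_insert_of_notMem (by simp [h13, h14]), Set.ncard_pair h15]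
  have hle' : ({p, q, r, s, t, u} : Set V).ncard ≤ (Set.univ : Set V).ncard :=
    Set.ncard_le_ncard (Set.subset_univ _) Set.finite_univ
  rw [Set.ncard_univ, Nat.card_eq_fintype_card] at hle'
  omega

lemma exists_mem_twinVertex {V : Type*} {G : SimpleGraph V} (A : TwinVertex G) :
    ∃ a, a ∈ A.1 := by
  obtain ⟨w, hw⟩ := A.2
  exact ⟨w, hw ▸ mem_twinClass_self w⟩

/-- The main contradiction lemma: three classes at distance 2 with signatures
X-only, Y-only, both. -/
lemma key {V : Type*} [Fintype V] (G : SimpleGraph V)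
    (hconn : G.Connected) (hle : ∀ u w : V, G.dist u w ≤ 2)
    (hbeta : metricDim G = Fintype.card V - 3)
    (v : V) (hhom2 : Homogeneous G (Gamma G 2 v))
    (X Y A B C : TwinVertex G) (hR : R1Star G v = {X, Y})
    (hA : A ∈ GammaStar G 2 v) (hB : B ∈ GammaStar G 2 v) (hC : C ∈ GammaStar G 2 v)
    (hAB : A ≠ B) (hAC : A ≠ C) (hBC : B ≠ C)
    (a b c x y : V) (ha : a ∈ A.1) (hb : b ∈ B.1) (hc : c ∈ C.1)
    (hx : x ∈ X.1) (hy : y ∈ Y.1)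
    (hax : G.Adj a x) (hay : ¬ G.Adj a y)
    (hbx : ¬ G.Adj b x) (hby : G.Adj b y)
    (hcx : G.Adj c x) (hcy : G.Adj c y) : False := by
  -- basic distance facts
  have distA : (twinGraph G).dist A (cls G v) = 2 := hA
  have distB : (twinGraph G).dist B (cls G v) = 2 := hB
  have distC : (twinGraph G).dist C (cls G v) = 2 := hC
  have hXR : X ∈ R1Star G v := by rw [hR]; exact Set.mem_insert _ _
  have hYR : Y ∈ R1Star G v := by rw [hR]; exact Set.mem_insert_of_mem _ rfl
  have hX1 : (twinGraph G).dist X (cls G v) = 1 := hXR.1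
  have hY1 : (twinGraph G).dist Y (cls G v) = 1 := hYR.1
  have hAX : A ≠ X := by rintro rfl; rw [distA] at hX1; exact absurd hX1 (by decide)
  have hAY : A ≠ Y := by rintro rfl; rw [distA] at hY1; exact absurd hY1 (by decide)
  have hBX : B ≠ X := by rintro rfl; rw [distB] at hX1; exact absurd hX1 (by decide)
  have hBY : B ≠ Y := by rintro rfl; rw [distB] at hY1; exact absurd hY1 (by decide)
  have hCX : C ≠ X := by rintro rfl; rw [distC] at hX1; exact absurd hX1 (by decide)
  have hCY : C ≠ Y := by rintro rfl; rw [distC] at hY1; exact absurd hY1 (by decide)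
  have hXY : X ≠ Y := by
    rintro rfl
    exact hay ((adj_iff_of_rel (rel_of_mem_mem hx hy) (ne_of_mem_ne hAX ha hx)
      (ne_of_mem_ne hAX ha hy)).mp hax)
  have dav : G.dist a v = 2 := dist_eq_two_of_gammaStar2 hconn hle hA ha
  have dbv : G.dist b v = 2 := dist_eq_two_of_gammaStar2 hconn hle hB hb
  have dcv : G.dist c v = 2 := dist_eq_two_of_gammaStar2 hconn hle hC hc
  have hXv : (twinGraph G).Adj X (cls G v) := SimpleGraph.dist_eq_one_iff_adj.mp hX1
  have hYv : (twinGraph G).Adj Y (cls G v) := SimpleGraph.dist_eq_one_iff_adj.mp hY1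
  have hXadjv : ∀ z ∈ X.1, G.Adj z v := fun z hz => adj_of_clsAdj hXv hz (mem_cls_self v)
  have hYadjv : ∀ z ∈ Y.1, G.Adj z v := fun z hz => adj_of_clsAdj hYv hz (mem_cls_self v)
  have hxv : G.Adj x v := hXadjv x hx
  have hyv : G.Adj y v := hYadjv y hy
  have hab : a ≠ b := ne_of_mem_ne hAB ha hb
  have hac : a ≠ c := ne_of_mem_ne hAC ha hc
  have hbc : b ≠ c := ne_of_mem_ne hBC hb hc
  have hav_ne : a ≠ v := by rintro rfl; rw [SimpleGraph.dist_self] at dav; exact absurd dav (by decide)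
  have hbv_ne : b ≠ v := by rintro rfl; rw [SimpleGraph.dist_self] at dbv; exact absurd dbv (by decide)
  have hcv_ne : c ≠ v := by rintro rfl; rw [SimpleGraph.dist_self] at dcv; exact absurd dcv (by decide)
  -- neighbours of a,b,c among Γ₁ are in X ∪ Y
  have nbr : ∀ (R : TwinVertex G), R ∈ GammaStar G 2 v → ∀ r ∈ R.1,
      ∀ z, G.Adj r z → G.Adj z v → z ∈ X.1 ∨ z ∈ Y.1 := by
    intro R hR2 r hr z h1 h2
    have hmem := mem_R1Star_of hconn hle hR2 hr h1 h2
    rw [hR] at hmem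
    rcases hmem with h | h
    · exact Or.inl (h ▸ mem_cls_self z)
    · exact Or.inr ((Set.mem_singleton_iff.mp h) ▸ mem_cls_self z)
  -- adjacency transfers to whole classes
  have haX : ∀ z ∈ X.1, G.Adj a z := fun z hz =>
    (adj_iff_of_rel (rel_of_mem_mem hx hz) (ne_of_mem_ne hAX ha hx)
      (ne_of_mem_ne hAX ha hz)).mp hax
  have haY : ∀ z ∈ Y.1, ¬ G.Adj a z := fun z hz h => hay
    ((adj_iff_of_rel (rel_of_mem_mem hy hz) (ne_of_mem_ne hAY ha hy)
      (ne_of_mem_ne hAY ha hz)).mpr h)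
  have hbX : ∀ z ∈ X.1, ¬ G.Adj b z := fun z hz h => hbx
    ((adj_iff_of_rel (rel_of_mem_mem hx hz) (ne_of_mem_ne hBX hb hx)
      (ne_of_mem_ne hBX hb hz)).mpr h)
  have hbY : ∀ z ∈ Y.1, G.Adj b z := fun z hz =>
    (adj_iff_of_rel (rel_of_mem_mem hy hz) (ne_of_mem_ne hBY hb hy)
      (ne_of_mem_ne hBY hb hz)).mp hby
  have hcX : ∀ z ∈ X.1, G.Adj c z := fun z hz =>
    (adj_iff_of_rel (rel_of_mem_mem hx hz) (ne_of_mem_ne hCX hc hx)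
      (ne_of_mem_ne hCX hc hz)).mp hcx
  have hcY : ∀ z ∈ Y.1, G.Adj c z := fun z hz =>
    (adj_iff_of_rel (rel_of_mem_mem hy hz) (ne_of_mem_ne hCY hc hy)
      (ne_of_mem_ne hCY hc hz)).mp hcy
  -- basic distances
  have dax : G.dist a x = 1 := SimpleGraph.dist_eq_one_iff_adj.mpr hax
  have day : G.dist a y = 2 := dist2 hconn hle (ne_of_mem_ne hAY ha hy) hay
  have dbx : G.dist b x = 2 := dist2 hconn hle (ne_of_mem_ne hBX hb hx) hbx
  have dby : G.dist b y = 1 := SimpleGraph.dist_eq_one_iff_adj.mpr hby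
  have dcx : G.dist c x = 1 := SimpleGraph.dist_eq_one_iff_adj.mpr hcx
  have dcy : G.dist c y = 1 := SimpleGraph.dist_eq_one_iff_adj.mpr hcy
  have dvx : G.dist v x = 1 := SimpleGraph.dist_eq_one_iff_adj.mpr hxv.symm
  have dvy : G.dist v y = 1 := SimpleGraph.dist_eq_one_iff_adj.mpr hyv.symm
  have trich : ∀ z : V, z = v ∨ G.Adj z v ∨ G.dist z v = 2 := by
    intro z
    by_cases h0 : z = v
    · exact Or.inl h0
    by_cases h1 : G.Adj z v
    · exact Or.inr (Or.inl h1)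
    · exact Or.inr (Or.inr (dist2 hconn hle h0 h1))
  rcases hhom2 with hK | hE
  · -- Γ₂ is complete
    by_cases hPw : ∃ w0, G.dist w0 v = 2 ∧ w0 ≠ a ∧ w0 ≠ b ∧ w0 ≠ c
    · obtain ⟨w0, hw2, hwa, hwb, hwc⟩ := hPw
      have dvw : G.dist v w0 = 2 := (SimpleGraph.dist_comm).trans hw2
      have dcw : G.dist c w0 = 1 :=
        SimpleGraph.dist_eq_one_iff_adj.mpr (hK c dcv w0 hw2 hwc.symm)
      have hwv_ne : w0 ≠ v := by
        rintro rfl; rw [SimpleGraph.dist_self] at hw2; exact absurd hw2 (by decide)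
      have htS : w0 ∉ ({v, a, b, c} : Set V) := by
        simp only [Set.mem_insert_iff, Set.mem_singleton_iff]
        push_neg
        exact ⟨hwv_ne, hwa, hwb, hwc⟩
      have hdiff : G.dist v w0 ≠ G.dist c w0 := by rw [dvw, dcw]; decide
      have hxS : x ∉ ({v, a, b, c} : Set V) := by
        simp only [Set.mem_insert_iff, Set.mem_singleton_iff]
        push_neg
        exact ⟨hxv.ne, (ne_of_mem_ne hAX ha hx).symm, (ne_of_mem_ne hBX hb hx).symm,
          (ne_of_mem_ne hCX hc hx).symm⟩
      have hyS : y ∉ ({v, a, b, c} : Set V) := by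
        simp only [Set.mem_insert_iff, Set.mem_singleton_iff]
        push_neg
        exact ⟨hyv.ne, (ne_of_mem_ne hAY ha hy).symm, (ne_of_mem_ne hBY hb hy).symm,
          (ne_of_mem_ne hCY hc hy).symm⟩
      refine contra_of_resolve_compl hbeta
        (ncard_quad hav_ne.symm hbv_ne.symm hcv_ne.symm hab hac hbc)
        (resolves_of_forall hconn _ ?_)
      intro u hu u' hu' hne
      simp only [Set.mem_insert_iff, Set.mem_singleton_iff] at hu hu'
      rcases hu with rfl | rfl | rfl | rfl <;> rcases hu' with rfl | rfl | rfl | rfl <;>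
        first
          | exact absurd rfl hne
          | exact ⟨x, hxS, by simp only [dvx, dax, dbx, dcx]; decide⟩
          | exact ⟨y, hyS, by simp only [dvy, day, dby, dcy]; decide⟩
          | exact ⟨w0, htS, hdiff⟩
          | exact ⟨w0, htS, hdiff.symm⟩
    by_cases hPz : ∃ z, G.Adj z v ∧ z ∉ X.1 ∧ z ∉ Y.1
    · obtain ⟨z, hzv, hzX, hzY⟩ := hPz
      have dvz : G.dist v z = 1 := SimpleGraph.dist_eq_one_iff_adj.mpr hzv.symm
      have hcz_ne : c ≠ z := by
        rintro rfl
        have := SimpleGraph.dist_eq_one_iff_adj.mpr hzv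
        rw [dcv] at this; exact absurd this (by decide)
      have hncz : ¬ G.Adj c z := by
        intro h
        rcases nbr C hC c hc z h hzv with h' | h'
        · exact hzX h'
        · exact hzY h'
      have dcz : G.dist c z = 2 := dist2 hconn hle hcz_ne hncz
      have hdiff : G.dist v z ≠ G.dist c z := by rw [dvz, dcz]; decide
      have hzS : z ∉ ({v, a, b, c} : Set V) := by
        simp only [Set.mem_insert_iff, Set.mem_singleton_iff]
        push_neg
        refine ⟨hzv.ne, ?_, ?_, hcz_ne.symm⟩
        · rintro rfl
          have := SimpleGraph.dist_eq_one_iff_adj.mpr hzv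
          rw [dav] at this; exact absurd this (by decide)
        · rintro rfl
          have := SimpleGraph.dist_eq_one_iff_adj.mpr hzv
          rw [dbv] at this; exact absurd this (by decide)
      have hxS : x ∉ ({v, a, b, c} : Set V) := by
        simp only [Set.mem_insert_iff, Set.mem_singleton_iff]
        push_neg
        exact ⟨hxv.ne, (ne_of_mem_ne hAX ha hx).symm, (ne_of_mem_ne hBX hb hx).symm,
          (ne_of_mem_ne hCX hc hx).symm⟩
      have hyS : y ∉ ({v, a, b, c} : Set V) := by
        simp only [Set.mem_insert_iff, Set.mem_singleton_iff]
        push_neg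
        exact ⟨hyv.ne, (ne_of_mem_ne hAY ha hy).symm, (ne_of_mem_ne hBY hb hy).symm,
          (ne_of_mem_ne hCY hc hy).symm⟩
      refine contra_of_resolve_compl hbeta
        (ncard_quad hav_ne.symm hbv_ne.symm hcv_ne.symm hab hac hbc)
        (resolves_of_forall hconn _ ?_)
      intro u hu u' hu' hne
      simp only [Set.mem_insert_iff, Set.mem_singleton_iff] at hu hu'
      rcases hu with rfl | rfl | rfl | rfl <;> rcases hu' with rfl | rfl | rfl | rfl <;>
        first
          | exact absurd rfl hne
          | exact ⟨x, hxS, by simp only [dvx, dax, dbx, dcx]; decide⟩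
          | exact ⟨y, hyS, by simp only [dvy, day, dby, dcy]; decide⟩
          | exact ⟨z, hzS, hdiff⟩
          | exact ⟨z, hzS, hdiff.symm⟩
    -- Γ₂ = {a, b, c}, Γ₁ = X ∪ Y
    push_neg at hPw hPz
    by_cases hX2 : ∃ x', x' ∈ X.1 ∧ x' ≠ x
    · obtain ⟨x', hx'1, hx'2⟩ := hX2
      have dbx' : G.dist b x' = 2 :=
        dist2 hconn hle (ne_of_mem_ne hBX hb hx'1) (hbX x' hx'1)
      have dcx' : G.dist c x' = 1 := SimpleGraph.dist_eq_one_iff_adj.mpr (hcX x' hx'1)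
      have dxvd : G.dist x v = 1 := SimpleGraph.dist_eq_one_iff_adj.mpr hxv
      have hyS : y ∉ ({a, b, c, x} : Set V) := by
        simp only [Set.mem_insert_iff, Set.mem_singleton_iff]
        push_neg
        exact ⟨(ne_of_mem_ne hAY ha hy).symm, (ne_of_mem_ne hBY hb hy).symm,
          (ne_of_mem_ne hCY hc hy).symm, (ne_of_mem_ne hXY hx hy).symm⟩
      have hx'S : x' ∉ ({a, b, c, x} : Set V) := by
        simp only [Set.mem_insert_iff, Set.mem_singleton_iff]
        push_neg
        exact ⟨(ne_of_mem_ne hAX ha hx'1).symm, (ne_of_mem_ne hBX hb hx'1).symm,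
          (ne_of_mem_ne hCX hc hx'1).symm, hx'2⟩
      have hvS : v ∉ ({a, b, c, x} : Set V) := by
        simp only [Set.mem_insert_iff, Set.mem_singleton_iff]
        push_neg
        exact ⟨hav_ne.symm, hbv_ne.symm, hcv_ne.symm, hxv.ne'⟩
      refine contra_of_resolve_compl hbeta
        (ncard_quad hab hac (ne_of_mem_ne hAX ha hx) hbc (ne_of_mem_ne hBX hb hx)
          (ne_of_mem_ne hCX hc hx))
        (resolves_of_forall hconn _ ?_)
      intro u hu u' hu' hne
      simp only [Set.mem_insert_iff, Set.mem_singleton_iff] at hu hu'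
      rcases hu with rfl | rfl | rfl | rfl <;> rcases hu' with rfl | rfl | rfl | rfl <;>
        first
          | exact absurd rfl hne
          | exact ⟨y, hyS, by simp only [day, dby, dcy]; decide⟩
          | exact ⟨x', hx'S, by simp only [dbx', dcx']; decide⟩
          | exact ⟨v, hvS, by simp only [dav, dbv, dcv, dxvd]; decide⟩
    by_cases hY2 : ∃ y', y' ∈ Y.1 ∧ y' ≠ y
    · obtain ⟨y', hy'1, hy'2⟩ := hY2
      have day' : G.dist a y' = 2 :=
        dist2 hconn hle (ne_of_mem_ne hAY ha hy'1) (haY y' hy'1)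
      have dcy' : G.dist c y' = 1 := SimpleGraph.dist_eq_one_iff_adj.mpr (hcY y' hy'1)
      have dyvd : G.dist y v = 1 := SimpleGraph.dist_eq_one_iff_adj.mpr hyv
      have hxS : x ∉ ({a, b, c, y} : Set V) := by
        simp only [Set.mem_insert_iff, Set.mem_singleton_iff]
        push_neg
        exact ⟨(ne_of_mem_ne hAX ha hx).symm, (ne_of_mem_ne hBX hb hx).symm,
          (ne_of_mem_ne hCX hc hx).symm, ne_of_mem_ne hXY hx hy⟩
      have hy'S : y' ∉ ({a, b, c, y} : Set V) := by
        simp only [Set.mem_insert_iff, Set.mem_singleton_iff]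
        push_neg
        exact ⟨(ne_of_mem_ne hAY ha hy'1).symm, (ne_of_mem_ne hBY hb hy'1).symm,
          (ne_of_mem_ne hCY hc hy'1).symm, hy'2⟩
      have hvS : v ∉ ({a, b, c, y} : Set V) := by
        simp only [Set.mem_insert_iff, Set.mem_singleton_iff]
        push_neg
        exact ⟨hav_ne.symm, hbv_ne.symm, hcv_ne.symm, hyv.ne'⟩
      refine contra_of_resolve_compl hbeta
        (ncard_quad hab hac (ne_of_mem_ne hAY ha hy) hbc (ne_of_mem_ne hBY hb hy)
          (ne_of_mem_ne hCY hc hy))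
        (resolves_of_forall hconn _ ?_)
      intro u hu u' hu' hne
      simp only [Set.mem_insert_iff, Set.mem_singleton_iff] at hu hu'
      rcases hu with rfl | rfl | rfl | rfl <;> rcases hu' with rfl | rfl | rfl | rfl <;>
        first
          | exact absurd rfl hne
          | exact ⟨x, hxS, by simp only [dax, dbx, dcx]; decide⟩
          | exact ⟨y', hy'S, by simp only [day', dcy']; decide⟩
          | exact ⟨v, hvS, by simp only [dav, dbv, dcv, dyvd]; decide⟩
    -- the six-vertex case
    push_neg at hX2 hY2
    have huniv : ∀ z : V, z = v ∨ z = x ∨ z = y ∨ z = a ∨ z = b ∨ z = c := by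
      intro z
      rcases trich z with h | h | h
      · exact Or.inl h
      · right
        by_cases hzX : z ∈ X.1
        · exact Or.inl (hX2 z hzX)
        · exact Or.inr (Or.inl (hY2 z (hPz z h hzX)))
      · right; right; right
        by_cases hza : z = a
        · exact Or.inl hza
        by_cases hzb : z = b
        · exact Or.inr (Or.inl hzb)
        · exact Or.inr (Or.inr (hPw z h hza hzb))
    have dva : G.dist v a = 2 := (SimpleGraph.dist_comm).trans dav
    have dxa : G.dist x a = 1 := SimpleGraph.dist_eq_one_iff_adj.mpr hax.symm
    have dya : G.dist y a = 2 :=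
      dist2 hconn hle (ne_of_mem_ne hAY ha hy).symm (fun h => hay h.symm)
    have dca : G.dist c a = 1 :=
      SimpleGraph.dist_eq_one_iff_adj.mpr (hK c dcv a dav hac.symm)
    have daa : G.dist a a = 0 := SimpleGraph.dist_self
    have dba : G.dist b a = 1 :=
      SimpleGraph.dist_eq_one_iff_adj.mpr (hK b dbv a dav hab.symm)
    have dvb : G.dist v b = 2 := (SimpleGraph.dist_comm).trans dbv
    have dxb : G.dist x b = 2 :=
      dist2 hconn hle (ne_of_mem_ne hBX hb hx).symm (fun h => hbX x hx h.symm)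
    have dyb : G.dist y b = 1 := SimpleGraph.dist_eq_one_iff_adj.mpr hby.symm
    have dcb : G.dist c b = 1 :=
      SimpleGraph.dist_eq_one_iff_adj.mpr (hK c dcv b dbv hbc.symm)
    have dab : G.dist a b = 1 :=
      SimpleGraph.dist_eq_one_iff_adj.mpr (hK a dav b dbv hab)
    have dbb : G.dist b b = 0 := SimpleGraph.dist_self
    have hres : Resolves G {a, b} := by
      intro u u' hne
      rcases huniv u with h | h | h | h | h | h <;>
        rcases huniv u' with h' | h' | h' | h' | h' | h' <;>
        rw [h, h'] at hne ⊢ <;>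
        first
          | exact absurd rfl hne
          | exact ⟨a, Set.mem_insert _ _, by simp only [dva, dxa, dya, dca, daa, dba]; decide⟩
          | exact ⟨b, Set.mem_insert_of_mem _ rfl,
              by simp only [dvb, dxb, dyb, dcb, dab, dbb]; decide⟩
    have h6 : 6 ≤ Fintype.card V :=
      card_ge_six hxv.ne' hyv.ne' hav_ne.symm hbv_ne.symm hcv_ne.symm
        (ne_of_mem_ne hXY hx hy) (ne_of_mem_ne hAX ha hx).symm
        (ne_of_mem_ne hBX hb hx).symm (ne_of_mem_ne hCX hc hx).symm
        (ne_of_mem_ne hAY ha hy).symm (ne_of_mem_ne hBY hb hy).symm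
        (ne_of_mem_ne hCY hc hy).symm hab hac hbc
    refine contra_of_resolve hbeta hres ?_
    rw [Set.ncard_pair hab]
    omega
  · -- Γ₂ is empty
    have hz : ∃ z, G.Adj z v ∧ z ∉ X.1 ∧ z ∉ Y.1 := by
      by_contra hcontra
      push_neg at hcontra
      have hcvne : c ≠ v := hcv_ne
      have hncv : ¬ G.Adj c v := by
        intro h
        have := SimpleGraph.dist_eq_one_iff_adj.mpr h
        rw [dcv] at this; exact absurd this (by decide)
      have hset : G.neighborSet c \ {v} = G.neighborSet v \ {c} := by
        ext z
        simp only [Set.mem_diff, SimpleGraph.mem_neighborSet, Set.mem_singleton_iff]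
        constructor
        · rintro ⟨hcz, hzv⟩
          refine ⟨?_, hcz.ne'⟩
          rcases trich z with rfl | h | h
          · exact absurd rfl hzv
          · exact h.symm
          · exact absurd hcz (hE c dcv z h)
        · rintro ⟨hvz, hzc⟩
          refine ⟨?_, hvz.ne'⟩
          by_cases hzX : z ∈ X.1
          · exact hcX z hzX
          · exact hcY z (hcontra z hvz.symm hzX)
      have hrel : twinRel G c v := Or.inr ⟨hcvne, hset⟩
      have : C = cls G v := (cls_eq_of_mem hc).trans (Subtype.ext (twinClass_eq hrel))
      exact (gammaStar2_props hC).1 this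
    obtain ⟨z, hzv, hzX, hzY⟩ := hz
    have dvz : G.dist v z = 1 := SimpleGraph.dist_eq_one_iff_adj.mpr hzv.symm
    have hcz_ne : c ≠ z := by
      rintro rfl
      have := SimpleGraph.dist_eq_one_iff_adj.mpr hzv
      rw [dcv] at this; exact absurd this (by decide)
    have hncz : ¬ G.Adj c z := by
      intro h
      rcases nbr C hC c hc z h hzv with h' | h'
      · exact hzX h'
      · exact hzY h'
    have dcz : G.dist c z = 2 := dist2 hconn hle hcz_ne hncz
    have hdiff : G.dist v z ≠ G.dist c z := by rw [dvz, dcz]; decide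
    have hzS : z ∉ ({v, a, b, c} : Set V) := by
      simp only [Set.mem_insert_iff, Set.mem_singleton_iff]
      push_neg
      refine ⟨hzv.ne, ?_, ?_, hcz_ne.symm⟩
      · rintro rfl
        have := SimpleGraph.dist_eq_one_iff_adj.mpr hzv
        rw [dav] at this; exact absurd this (by decide)
      · rintro rfl
        have := SimpleGraph.dist_eq_one_iff_adj.mpr hzv
        rw [dbv] at this; exact absurd this (by decide)
    have hxS : x ∉ ({v, a, b, c} : Set V) := by
      simp only [Set.mem_insert_iff, Set.mem_singleton_iff]
      push_neg
      exact ⟨hxv.ne, (ne_of_mem_ne hAX ha hx).symm, (ne_of_mem_ne hBX hb hx).symm,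
        (ne_of_mem_ne hCX hc hx).symm⟩
    have hyS : y ∉ ({v, a, b, c} : Set V) := by
      simp only [Set.mem_insert_iff, Set.mem_singleton_iff]
      push_neg
      exact ⟨hyv.ne, (ne_of_mem_ne hAY ha hy).symm, (ne_of_mem_ne hBY hb hy).symm,
        (ne_of_mem_ne hCY hc hy).symm⟩
    refine contra_of_resolve_compl hbeta
      (ncard_quad hav_ne.symm hbv_ne.symm hcv_ne.symm hab hac hbc)
      (resolves_of_forall hconn _ ?_)
    intro u hu u' hu' hne
    simp only [Set.mem_insert_iff, Set.mem_singleton_iff] at hu hu'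
    rcases hu with rfl | rfl | rfl | rfl <;> rcases hu' with rfl | rfl | rfl | rfl <;>
      first
        | exact absurd rfl hne
        | exact ⟨x, hxS, by simp only [dvx, dax, dbx, dcx]; decide⟩
        | exact ⟨y, hyS, by simp only [dvy, day, dby, dcy]; decide⟩
        | exact ⟨z, hzS, hdiff⟩
        | exact ⟨z, hzS, hdiff.symm⟩

lemma sig_or {V : Type*} {G : SimpleGraph V}
    (hconn : G.Connected) (hle : ∀ u w : V, G.dist u w ≤ 2)
    {v : V} {X Y A : TwinVertex G} (hR : R1Star G v = {X, Y})
    (hA : A ∈ GammaStar G 2 v) {a x y : V} (ha : a ∈ A.1) (hx : x ∈ X.1) (hy : y ∈ Y.1) :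
    G.Adj a x ∨ G.Adj a y := by
  have distA : (twinGraph G).dist A (cls G v) = 2 := hA
  have hXR : X ∈ R1Star G v := by rw [hR]; exact Set.mem_insert _ _
  have hYR : Y ∈ R1Star G v := by rw [hR]; exact Set.mem_insert_of_mem _ rfl
  have hX1 : (twinGraph G).dist X (cls G v) = 1 := hXR.1
  have hY1 : (twinGraph G).dist Y (cls G v) = 1 := hYR.1
  have hAX : A ≠ X := by rintro rfl; rw [distA] at hX1; exact absurd hX1 (by decide)
  have hAY : A ≠ Y := by rintro rfl; rw [distA] at hY1; exact absurd hY1 (by decide)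
  have dav : G.dist a v = 2 := dist_eq_two_of_gammaStar2 hconn hle hA ha
  obtain ⟨u, h1, h2⟩ := exists_mid dav
  have hmem := mem_R1Star_of hconn hle hA ha h1 h2
  rw [hR] at hmem
  rcases hmem with h | h
  · left
    have hu : u ∈ X.1 := h ▸ mem_cls_self u
    exact (adj_iff_of_rel (rel_of_mem_mem hu hx) h1.ne (ne_of_mem_ne hAX ha hx)).mp h1
  · right
    have hu : u ∈ Y.1 := (Set.mem_singleton_iff.mp h) ▸ mem_cls_self u
    exact (adj_iff_of_rel (rel_of_mem_mem hu hy) h1.ne (ne_of_mem_ne hAY ha hy)).mp h1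

lemma sig_unique {V : Type*} {G : SimpleGraph V}
    (hconn : G.Connected) (hle : ∀ u w : V, G.dist u w ≤ 2)
    {v : V} (hhom2 : Homogeneous G (Gamma G 2 v))
    {X Y A B : TwinVertex G} (hR : R1Star G v = {X, Y})
    (hA : A ∈ GammaStar G 2 v) (hB : B ∈ GammaStar G 2 v)
    {a b x y : V} (ha : a ∈ A.1) (hb : b ∈ B.1) (hx : x ∈ X.1) (hy : y ∈ Y.1)
    (hiffx : G.Adj a x ↔ G.Adj b x) (hiffy : G.Adj a y ↔ G.Adj b y) : A = B := by
  by_contra hAB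
  have hXR : X ∈ R1Star G v := by rw [hR]; exact Set.mem_insert _ _
  have hYR : Y ∈ R1Star G v := by rw [hR]; exact Set.mem_insert_of_mem _ rfl
  have hX1 : (twinGraph G).dist X (cls G v) = 1 := hXR.1
  have hY1 : (twinGraph G).dist Y (cls G v) = 1 := hYR.1
  have hab : a ≠ b := ne_of_mem_ne hAB ha hb
  have dav : G.dist a v = 2 := dist_eq_two_of_gammaStar2 hconn hle hA ha
  have dbv : G.dist b v = 2 := dist_eq_two_of_gammaStar2 hconn hle hB hb
  have trich : ∀ z : V, z = v ∨ G.Adj z v ∨ G.dist z v = 2 := by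
    intro z
    by_cases h0 : z = v
    · exact Or.inl h0
    by_cases h1 : G.Adj z v
    · exact Or.inr (Or.inl h1)
    · exact Or.inr (Or.inr (dist2 hconn hle h0 h1))
  have core : ∀ (P Q : TwinVertex G) (p q : V), P ∈ GammaStar G 2 v → Q ∈ GammaStar G 2 v →
      p ∈ P.1 → q ∈ Q.1 → (G.Adj p x ↔ G.Adj q x) → (G.Adj p y ↔ G.Adj q y) →
      ∀ z, G.Adj p z → z ≠ q → G.Adj q z := by
    intro P Q p q hP hQ hp hq hix hiy z hpz hzq
    have distP : (twinGraph G).dist P (cls G v) = 2 := hP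
    have distQ : (twinGraph G).dist Q (cls G v) = 2 := hQ
    have hPX : P ≠ X := by rintro rfl; rw [distP] at hX1; exact absurd hX1 (by decide)
    have hPY : P ≠ Y := by rintro rfl; rw [distP] at hY1; exact absurd hY1 (by decide)
    have hQX : Q ≠ X := by rintro rfl; rw [distQ] at hX1; exact absurd hX1 (by decide)
    have hQY : Q ≠ Y := by rintro rfl; rw [distQ] at hY1; exact absurd hY1 (by decide)
    have dpv : G.dist p v = 2 := dist_eq_two_of_gammaStar2 hconn hle hP hp
    have dqv : G.dist q v = 2 := dist_eq_two_of_gammaStar2 hconn hle hQ hq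
    rcases trich z with rfl | h | h
    · exfalso
      have := SimpleGraph.dist_eq_one_iff_adj.mpr hpz
      rw [dpv] at this; exact absurd this (by decide)
    · -- z ∈ Γ₁
      have hqz_ne : q ≠ z := by
        rintro rfl
        have := SimpleGraph.dist_eq_one_iff_adj.mpr h
        rw [dqv] at this; exact absurd this (by decide)
      have hmem := mem_R1Star_of hconn hle hP hp hpz h
      rw [hR] at hmem
      rcases hmem with h' | h'
      · have hz : z ∈ X.1 := h' ▸ mem_cls_self z
        have h1 : G.Adj p x := (adj_iff_of_rel (rel_of_mem_mem hz hx) hpz.ne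
          (ne_of_mem_ne hPX hp hx)).mp hpz
        have h2 : G.Adj q x := hix.mp h1
        exact (adj_iff_of_rel (rel_of_mem_mem hx hz) (ne_of_mem_ne hQX hq hx)
          hqz_ne).mp h2
      · have hz : z ∈ Y.1 := (Set.mem_singleton_iff.mp h') ▸ mem_cls_self z
        have h1 : G.Adj p y := (adj_iff_of_rel (rel_of_mem_mem hz hy) hpz.ne
          (ne_of_mem_ne hPY hp hy)).mp hpz
        have h2 : G.Adj q y := hiy.mp h1
        exact (adj_iff_of_rel (rel_of_mem_mem hy hz) (ne_of_mem_ne hQY hq hy)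
          hqz_ne).mp h2
    · -- z ∈ Γ₂
      rcases hhom2 with hK | hE
      · exact hK q dqv z h hzq.symm
      · exact absurd hpz (hE p dpv z h)
  have hset : G.neighborSet a \ {b} = G.neighborSet b \ {a} := by
    ext z
    simp only [Set.mem_diff, SimpleGraph.mem_neighborSet, Set.mem_singleton_iff]
    constructor
    · rintro ⟨hz1, hz2⟩
      exact ⟨core A B a b hA hB ha hb hiffx hiffy z hz1 hz2, hz1.ne'⟩
    · rintro ⟨hz1, hz2⟩
      exact ⟨core B A b a hB hA hb ha hiffx.symm hiffy.symm z hz1 hz2, hz1.ne'⟩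
  have hrel : twinRel G a b := Or.inr ⟨hab, hset⟩
  exact hAB ((cls_eq_of_mem ha).trans ((Subtype.ext (twinClass_eq hrel)).trans
    (cls_eq_of_mem hb).symm))

set_option maxHeartbeats 2000000 in
theorem gammaStar_two_card_le_two'
    {V : Type*} [Fintype V] (G : SimpleGraph V)
    (hdiam : diamEq G 2)
    (hbeta : metricDim G = Fintype.card V - 3)
    (v : V) (h2 : (GammaStar G 2 v).Nonempty)
    (hhom : Homogeneous G (Gamma G 1 v))
    (hhom2 : Homogeneous G (Gamma G 2 v))
    (hR1 : (R1Star G v).ncard = 2) :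
    (GammaStar G 2 v).ncard ≤ 2 := by
  obtain ⟨hconn, hle, -⟩ := hdiam
  by_contra hcon
  push_neg at hcon
  have hfin : (GammaStar G 2 v).Finite := Set.finite_of_ncard_ne_zero (by omega)
  obtain ⟨A, B, C, hA, hB, hC, hAB, hAC, hBC⟩ := (Set.two_lt_ncard_iff hfin).mp hcon
  obtain ⟨X, Y, hXY, hR⟩ := Set.ncard_eq_two.mp hR1
  obtain ⟨a, ha⟩ := exists_mem_twinVertex A
  obtain ⟨b, hb⟩ := exists_mem_twinVertex B
  obtain ⟨c, hc⟩ := exists_mem_twinVertex C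
  obtain ⟨x, hx⟩ := exists_mem_twinVertex X
  obtain ⟨y, hy⟩ := exists_mem_twinVertex Y
  have sA := sig_or hconn hle hR hA ha hx hy
  have sB := sig_or hconn hle hR hB hb hx hy
  have sC := sig_or hconn hle hR hC hc hx hy
  have cA : (G.Adj a x ∧ ¬ G.Adj a y) ∨ (¬ G.Adj a x ∧ G.Adj a y) ∨
      (G.Adj a x ∧ G.Adj a y) := by tauto
  have cB : (G.Adj b x ∧ ¬ G.Adj b y) ∨ (¬ G.Adj b x ∧ G.Adj b y) ∨
      (G.Adj b x ∧ G.Adj b y) := by tauto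
  have cC : (G.Adj c x ∧ ¬ G.Adj c y) ∨ (¬ G.Adj c x ∧ G.Adj c y) ∨
      (G.Adj c x ∧ G.Adj c y) := by tauto
  rcases cA with ⟨ha1, ha2⟩ | ⟨ha1, ha2⟩ | ⟨ha1, ha2⟩ <;>
    rcases cB with ⟨hb1, hb2⟩ | ⟨hb1, hb2⟩ | ⟨hb1, hb2⟩ <;>
    rcases cC with ⟨hc1, hc2⟩ | ⟨hc1, hc2⟩ | ⟨hc1, hc2⟩ <;>
    first
      | exact absurd (sig_unique hconn hle hhom2 hR hA hB ha hb hx hy (iff_of_true ha1 hb1) (iff_of_false ha2 hb2)) hAB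
      | exact absurd (sig_unique hconn hle hhom2 hR hA hB ha hb hx hy (iff_of_false ha1 hb1) (iff_of_true ha2 hb2)) hAB
      | exact absurd (sig_unique hconn hle hhom2 hR hA hB ha hb hx hy (iff_of_true ha1 hb1) (iff_of_true ha2 hb2)) hAB
      | exact absurd (sig_unique hconn hle hhom2 hR hA hC ha hc hx hy (iff_of_true ha1 hc1) (iff_of_false ha2 hc2)) hAC
      | exact absurd (sig_unique hconn hle hhom2 hR hA hC ha hc hx hy (iff_of_false ha1 hc1) (iff_of_true ha2 hc2)) hAC
      | exact absurd (sig_unique hconn hle hhom2 hR hA hC ha hc hx hy (iff_of_true ha1 hc1) (iff_of_true ha2 hc2)) hAC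
      | exact absurd (sig_unique hconn hle hhom2 hR hB hC hb hc hx hy (iff_of_true hb1 hc1) (iff_of_false hb2 hc2)) hBC
      | exact absurd (sig_unique hconn hle hhom2 hR hB hC hb hc hx hy (iff_of_false hb1 hc1) (iff_of_true hb2 hc2)) hBC
      | exact absurd (sig_unique hconn hle hhom2 hR hB hC hb hc hx hy (iff_of_true hb1 hc1) (iff_of_true hb2 hc2)) hBC
      | exact key G hconn hle hbeta v hhom2 X Y A B C hR hA hB hC hAB hAC hBC a b c x y ha hb hc hx hy ha1 ha2 hb1 hb2 hc1 hc2
      | exact key G hconn hle hbeta v hhom2 X Y A C B hR hA hC hB hAC hAB hBC.symm a c b x y ha hc hb hx hy ha1 ha2 hc1 hc2 hb1 hb2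
      | exact key G hconn hle hbeta v hhom2 X Y B A C hR hB hA hC hAB.symm hBC hAC b a c x y hb ha hc hx hy hb1 hb2 ha1 ha2 hc1 hc2
      | exact key G hconn hle hbeta v hhom2 X Y B C A hR hB hC hA hBC hAB.symm hAC.symm b c a x y hb hc ha hx hy hb1 hb2 hc1 hc2 ha1 ha2
      | exact key G hconn hle hbeta v hhom2 X Y C A B hR hC hA hB hAC.symm hBC.symm hAB c a b x y hc ha hb hx hy hc1 hc2 ha1 ha2 hb1 hb2
      | exact key G hconn hle hbeta v hhom2 X Y C B A hR hC hB hA hBC.symm hAC.symm hAB.symm c b a x y hc hb ha hx hy hc1 hc2 hb1 hb2 ha1 ha2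


/-- If `G` is connected of order `n`, `diam(G) = 2`, `β(G) = n - 3`, `v` is a
vertex with `Γ_2^*(v^*) ≠ ∅` and `Γ_1(v)` homogeneous, `Γ_2(v)` is homogeneous,
and `|R_1^*(v^*)| = 2`, then `|Γ_2^*(v^*)| ≤ 2`. -/
theorem gammaStar_two_card_le_two
    {V : Type*} [Fintype V] (G : SimpleGraph V)
    (hdiam : diamEq G 2)
    (hbeta : metricDim G = Fintype.card V - 3)
    (v : V) (h2 : (GammaStar G 2 v).Nonempty)
    (hhom : Homogeneous G (Gamma G 1 v))
    (hhom2 : Homogeneous G (Gamma G 2 v))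
    (hR1 : (R1Star G v).ncard = 2) :
    (GammaStar G 2 v).ncard ≤ 2 :=
  gammaStar_two_card_le_two' G hdiam hbeta v h2 hhom hhom2 hR1

end PaperMetricDim
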